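/- Let (W,S) be a Coxeter system with Coxeter matrix m and let T ⊆ S be such that for every t ∈ T and s ∈ S∖T the exponent m_{st} is even or ∞. Then the pair (ker φ_T, S_T) is a Coxeter system: there exist a Coxeter matrix m' indexed by the set S_T and a group isomorphism from the Coxeter group defined by m' onto ker φ_T which carries the simple generators bijectively onto the set S_T ⊆ ker φ_T. -/
import Mathlib

open CoxeterSystem SemidirectProduct

namespace KernelCoxAux

variable {B W : Type*} [Group W] (M : CoxeterMatrix B) (cs : CoxeterSystem M W) (T : Set B)

/-- Conjugation-invariance of order. -/
lemma orderOf_conj' {G : Type*} [Group G] (a x : G) : orderOf (a * x * a⁻¹) = orderOf x := by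
  have := orderOf_injective (MulAut.conj a).toMonoidHom (MulAut.conj a).injective x
  simpa [MulAut.conj_apply] using this

lemma orderOf_mul_comm' {G : Type*} [Group G] (a b : G) : orderOf (a * b) = orderOf (b * a) := by
  have := orderOf_conj' a (b * a)
  rw [← this]; congr 1; group

/-- `W' = W_{S \ T}`. -/
def W' : Subgroup W := Subgroup.closure (cs.simple '' Tᶜ)

/-- The set `S_T`. -/
def SetI : Set W :=
  {x : W | ∃ t ∈ T, ∃ w ∈ Subgroup.closure (cs.simple '' Tᶜ), x = w * cs.simple t * w⁻¹}

lemma sq_one (x : SetI M cs T) : (x : W) * (x : W) = 1 := by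
  obtain ⟨x, t, ht, w, hw, rfl⟩ := x
  simp only
  calc w * cs.simple t * w⁻¹ * (w * cs.simple t * w⁻¹)
      = w * (cs.simple t * cs.simple t) * w⁻¹ := by group
    _ = 1 := by rw [cs.simple_mul_simple_self]; group

lemma inv_eq (x : SetI M cs T) : (x : W)⁻¹ = x :=
  (eq_inv_of_mul_eq_one_right (sq_one M cs T x)).symm

lemma conj_mem {u : W} (hu : u ∈ W' M cs T) {x : W} (hx : x ∈ SetI M cs T) :
    u * x * u⁻¹ ∈ SetI M cs T := by
  obtain ⟨t, ht, w, hw, rfl⟩ := hx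
  exact ⟨t, ht, u * w, mul_mem hu hw, by group⟩

/-- The Coxeter matrix on `S_T`. -/
noncomputable def M' : CoxeterMatrix (SetI M cs T) where
  M := Matrix.of fun τ σ => orderOf ((τ : W) * (σ : W))
  isSymm := by
    apply Matrix.ext
    intro τ σ
    simp only [Matrix.transpose_apply, Matrix.of_apply]
    exact orderOf_mul_comm' _ _
  diagonal τ := by
    simp only [Matrix.of_apply, sq_one M cs T τ, orderOf_one]
  off_diagonal τ σ h := by
    simp only [Matrix.of_apply, ne_eq, orderOf_eq_one_iff]
    intro h1
    apply h
    ext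
    have : (τ : W) = (σ : W)⁻¹ := eq_inv_of_mul_eq_one_left h1
    rw [this, inv_eq]

lemma M'_apply (τ σ : SetI M cs T) : M' M cs T τ σ = orderOf ((τ : W) * (σ : W)) := rfl

/-- The restricted Coxeter matrix on `S \ T`. -/
def M'' : CoxeterMatrix {s : B // s ∉ T} where
  M := Matrix.of fun s s' => M s.1 s'.1
  isSymm := by
    apply Matrix.ext
    intro s s'
    simpa using M.symmetric s'.1 s.1
  diagonal s := M.diagonal s.1
  off_diagonal s s' h := M.off_diagonal s.1 s'.1 (fun hh => h (Subtype.ext hh))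

lemma M''_apply (s s' : {s : B // s ∉ T}) : M'' M T s s' = M s.1 s'.1 := rfl

/-- The embedding `ρ : (M'').Group →* W`. -/
def ρ : (M'' M T).Group →* W :=
  (M'' M T).toCoxeterSystem.lift ⟨fun s => cs.simple s.1, fun s s' => by
    rw [M''_apply]; exact cs.simple_mul_simple_pow s.1 s'.1⟩

lemma ρ_simple (s : {s : B // s ∉ T}) : ρ M cs T ((M'' M T).simple s) = cs.simple s.1 := by
  have := (M'' M T).toCoxeterSystem.lift_apply_simple
    (f := fun s : {s : B // s ∉ T} => cs.simple s.1)
    (fun s s' => by rw [M''_apply]; exact cs.simple_mul_simple_pow s.1 s'.1) s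
  rw [CoxeterMatrix.toCoxeterSystem_simple] at this
  exact this

lemma ρ_mem (g : (M'' M T).Group) : ρ M cs T g ∈ W' M cs T := by
  induction g using (M'' M T).toCoxeterSystem.simple_induction with
  | simple s =>
    rw [CoxeterMatrix.toCoxeterSystem_simple, ρ_simple]
    exact Subgroup.subset_closure ⟨s.1, s.2, rfl⟩
  | one => simp only [map_one]; exact one_mem _
  | mul w w' hw hw' => rw [map_mul]; exact mul_mem hw hw'


/-- Conjugation action of `(M'').Group` on the index set `S_T`. -/
def c : (M'' M T).Group →* Equiv.Perm (SetI M cs T) where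
  toFun g :=
    { toFun := fun τ => ⟨ρ M cs T g * τ * (ρ M cs T g)⁻¹, conj_mem M cs T (ρ_mem M cs T g) τ.2⟩
      invFun := fun τ => ⟨ρ M cs T g⁻¹ * τ * (ρ M cs T g⁻¹)⁻¹,
        conj_mem M cs T (ρ_mem M cs T g⁻¹) τ.2⟩
      left_inv := fun τ => by ext; simp only [map_inv]; group
      right_inv := fun τ => by ext; simp only [map_inv]; group }
  map_one' := by ext τ; simp
  map_mul' g g' := by ext τ; simp only [Equiv.coe_fn_mk, Equiv.Perm.mul_apply, map_mul]; group

lemma c_apply (g : (M'' M T).Group) (τ : SetI M cs T) :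
    (c M cs T g τ : W) = ρ M cs T g * τ * (ρ M cs T g)⁻¹ := rfl

lemma M'_c (g : (M'' M T).Group) (τ σ : SetI M cs T) :
    M' M cs T (c M cs T g τ) (c M cs T g σ) = M' M cs T τ σ := by
  rw [M'_apply, M'_apply, c_apply, c_apply]
  have : ρ M cs T g * ↑τ * (ρ M cs T g)⁻¹ * (ρ M cs T g * ↑σ * (ρ M cs T g)⁻¹)
      = ρ M cs T g * (↑τ * ↑σ) * (ρ M cs T g)⁻¹ := by group
  rw [this, orderOf_conj']

lemma A_liftable (g : (M'' M T).Group) :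
    CoxeterMatrix.IsLiftable (M' M cs T)
      (fun τ => (M' M cs T).simple (c M cs T g τ)) := by
  intro τ σ
  have := (M' M cs T).toCoxeterSystem.simple_mul_simple_pow (c M cs T g τ) (c M cs T g σ)
  rw [CoxeterMatrix.toCoxeterSystem_simple, M'_c] at this
  exact this

/-- The endomorphism of `(M').Group` induced by `g`. -/
noncomputable def A (g : (M'' M T).Group) : (M' M cs T).Group →* (M' M cs T).Group :=
  (M' M cs T).toCoxeterSystem.lift ⟨fun τ => (M' M cs T).simple (c M cs T g τ), A_liftable M cs T g⟩

lemma A_simple (g : (M'' M T).Group) (τ : SetI M cs T) :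
    A M cs T g ((M' M cs T).simple τ) = (M' M cs T).simple (c M cs T g τ) := by
  have := (M' M cs T).toCoxeterSystem.lift_apply_simple (A_liftable M cs T g) τ
  rw [CoxeterMatrix.toCoxeterSystem_simple] at this
  exact this

lemma A_comp (g g' : (M'' M T).Group) :
    (A M cs T g).comp (A M cs T g') = A M cs T (g * g') := by
  apply (M' M cs T).toCoxeterSystem.ext_simple
  intro τ
  rw [CoxeterMatrix.toCoxeterSystem_simple]
  simp only [MonoidHom.comp_apply, A_simple, map_mul, Equiv.Perm.mul_apply]

lemma A_one : A M cs T 1 = MonoidHom.id _ := by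
  apply (M' M cs T).toCoxeterSystem.ext_simple
  intro τ
  rw [CoxeterMatrix.toCoxeterSystem_simple]
  simp only [A_simple, map_one, Equiv.Perm.coe_one, id_eq, MonoidHom.id_apply]

lemma A_A (g g' : (M'' M T).Group) (x : (M' M cs T).Group) :
    A M cs T g (A M cs T g' x) = A M cs T (g * g') x := by
  rw [← A_comp]; rfl

/-- The action `α : (M'').Group →* MulAut (M').Group`. -/
noncomputable def α : (M'' M T).Group →* MulAut (M' M cs T).Group where
  toFun g :=
    { toFun := A M cs T g
      invFun := A M cs T g⁻¹
      left_inv := fun x => by rw [A_A, inv_mul_cancel, A_one]; rfl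
      right_inv := fun x => by rw [A_A, mul_inv_cancel, A_one]; rfl
      map_mul' := (A M cs T g).map_mul }
  map_one' := by
    ext x
    simp only [MulEquiv.coe_mk, Equiv.coe_fn_mk, A_one, MonoidHom.id_apply, MulAut.one_apply]
  map_mul' g g' := by
    ext x
    simp only [MulEquiv.coe_mk, Equiv.coe_fn_mk, MulAut.mul_apply]
    rw [A_A]

lemma α_apply (g : (M'' M T).Group) (x : (M' M cs T).Group) :
    α M cs T g x = A M cs T g x := rfl

lemma α_simple (g : (M'' M T).Group) (τ : SetI M cs T) :
    α M cs T g ((M' M cs T).simple τ) = (M' M cs T).simple (c M cs T g τ) := A_simple M cs T g τ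


/-! ### Semidirect product computations -/

lemma pow_even_eq_one {G : Type*} [Monoid G] {x : G} (hx : x * x = 1) {n : ℕ} (hn : Even n) :
    x ^ n = 1 := by
  obtain ⟨q, rfl⟩ := hn
  rw [← two_mul, pow_mul, pow_two, hx, one_pow]

lemma sd_key {N G : Type*} [Group N] [Group G] {φ : G →* MulAut N} (g : G) (n : N) :
    (inr g * inl n : N ⋊[φ] G) = inl (φ g n) * inr g := by
  rw [inl_aut, mul_assoc, mul_assoc, ← map_mul, inv_mul_cancel, map_one, mul_one]

lemma sd_sq_ri {N G : Type*} [Group N] [Group G] {φ : G →* MulAut N} {g : G} (hg : g * g = 1)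
    (k : N) : (inr g * inl k : N ⋊[φ] G) * (inr g * inl k) = inl (φ g k * k) := by
  have h2 : φ g (φ g k) = k := by
    have : φ g (φ g k) = φ (g * g) k := by rw [map_mul, MulAut.mul_apply]
    rw [this, hg, map_one, MulAut.one_apply]
  calc (inr g * inl k : N ⋊[φ] G) * (inr g * inl k)
      = inl (φ g k) * (inr g * inl (φ g k)) * inr g := by rw [sd_key]; group
    _ = inl (φ g k) * (inl (φ g (φ g k)) * inr g) * inr g := by rw [sd_key]
    _ = inl (φ g k) * inl (φ g (φ g k)) * inr (g * g) := by rw [map_mul]; group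
    _ = inl (φ g k * k) := by rw [hg, map_one, mul_one, h2, ← map_mul]

lemma sd_sq_ir {N G : Type*} [Group N] [Group G] {φ : G →* MulAut N} {g : G} (hg : g * g = 1)
    (k : N) : (inl k * inr g : N ⋊[φ] G) * (inl k * inr g) = inl (k * φ g k) := by
  calc (inl k * inr g : N ⋊[φ] G) * (inl k * inr g)
      = inl k * (inr g * inl k) * inr g := by group
    _ = inl k * (inl (φ g k) * inr g) * inr g := by rw [sd_key]
    _ = inl k * inl (φ g k) * inr (g * g) := by rw [map_mul]; group
    _ = inl (k * φ g k) := by rw [hg, map_one, mul_one, ← map_mul]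

lemma sd_pow_even_ri {N G : Type*} [Group N] [Group G] {φ : G →* MulAut N} {g : G}
    (hg : g * g = 1) (k : N) (q : ℕ) :
    (inr g * inl k : N ⋊[φ] G) ^ (q + q) = inl ((φ g k * k) ^ q) := by
  rw [← two_mul, pow_mul, pow_two, sd_sq_ri hg, ← map_pow]

lemma sd_pow_even_ir {N G : Type*} [Group N] [Group G] {φ : G →* MulAut N} {g : G}
    (hg : g * g = 1) (k : N) (q : ℕ) :
    (inl k * inr g : N ⋊[φ] G) ^ (q + q) = inl ((k * φ g k) ^ q) := by
  rw [← two_mul, pow_mul, pow_two, sd_sq_ir hg, ← map_pow]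

/-- If a relation holds in `W`, the corresponding relation holds among the simple generators
of `(M').Group`. -/
lemma simple_pow_eq_one {n : ℕ} (τ σ : SetI M cs T) (h : ((τ : W) * (σ : W)) ^ n = 1) :
    ((M' M cs T).simple τ * (M' M cs T).simple σ) ^ n = 1 := by
  obtain ⟨k, hk⟩ := orderOf_dvd_of_pow_eq_one h
  have hrel := (M' M cs T).toCoxeterSystem.simple_mul_simple_pow τ σ
  rw [CoxeterMatrix.toCoxeterSystem_simple, M'_apply] at hrel
  rw [hk, pow_mul, hrel, one_pow]

/-! ### The homomorphism `Φ` -/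

lemma Φ₁_liftable : CoxeterMatrix.IsLiftable (M' M cs T) (fun τ => (τ : W)) := fun τ σ =>
  pow_orderOf_eq_one ((τ : W) * (σ : W))

/-- The homomorphism `(M').Group →* W` sending each simple generator to itself. -/
noncomputable def Φ₁ : (M' M cs T).Group →* W :=
  (M' M cs T).toCoxeterSystem.lift ⟨fun τ => (τ : W), Φ₁_liftable M cs T⟩

lemma Φ₁_simple (τ : SetI M cs T) : Φ₁ M cs T ((M' M cs T).simple τ) = (τ : W) := by
  have := (M' M cs T).toCoxeterSystem.lift_apply_simple (Φ₁_liftable M cs T) τ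
  rwa [CoxeterMatrix.toCoxeterSystem_simple] at this

lemma Φ_compat (g : (M'' M T).Group) :
    (Φ₁ M cs T).comp ((α M cs T g)).toMonoidHom =
      (MulAut.conj (ρ M cs T g)).toMonoidHom.comp (Φ₁ M cs T) := by
  apply (M' M cs T).toCoxeterSystem.ext_simple
  intro τ
  rw [CoxeterMatrix.toCoxeterSystem_simple]
  simp only [MonoidHom.comp_apply, MulEquiv.coe_toMonoidHom]
  rw [α_simple, Φ₁_simple, Φ₁_simple, MulAut.conj_apply, c_apply]

/-- The homomorphism `Φ : (M').Group ⋊ (M'').Group →* W`. -/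
noncomputable def Φ : ((M' M cs T).Group ⋊[α M cs T] (M'' M T).Group) →* W :=
  SemidirectProduct.lift (Φ₁ M cs T) (ρ M cs T) (Φ_compat M cs T)


/-! ### The homomorphism `Ψ` -/

variable (heven : ∀ t ∈ T, ∀ s ∉ T, Even (M t s))

lemma simple_mem_SetI {t : B} (ht : t ∈ T) : cs.simple t ∈ SetI M cs T :=
  ⟨t, ht, 1, one_mem _, by group⟩

open Classical in
/-- The generator images defining `Ψ`. -/
noncomputable def fΨ (s : B) : (M' M cs T).Group ⋊[α M cs T] (M'' M T).Group :=
  if h : s ∈ T then inl ((M' M cs T).simple ⟨cs.simple s, simple_mem_SetI M cs T h⟩)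
  else inr ((M'' M T).simple ⟨s, h⟩)

lemma σ_sq (s : {s : B // s ∉ T}) : (M'' M T).simple s * (M'' M T).simple s = 1 :=
  (M'' M T).toCoxeterSystem.simple_mul_simple_self s

include heven in
lemma fΨ_liftable : CoxeterMatrix.IsLiftable M (fΨ M cs T) := by
  intro i i'
  by_cases hi : i ∈ T <;> by_cases hi' : i' ∈ T <;> simp only [fΨ]
  · -- both in T
    rw [dif_pos hi, dif_pos hi']
    rw [← map_mul, ← map_pow]
    have : ((⟨cs.simple i, simple_mem_SetI M cs T hi⟩ : SetI M cs T) : W) *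
        ((⟨cs.simple i', simple_mem_SetI M cs T hi'⟩ : SetI M cs T) : W) =
        cs.simple i * cs.simple i' := rfl
    rw [simple_pow_eq_one M cs T _ _ (by rw [this]; exact cs.simple_mul_simple_pow i i'),
      map_one]
  · -- i ∈ T, i' ∉ T
    rw [dif_pos hi, dif_neg hi']
    obtain ⟨q, hq⟩ := heven i hi i' hi'
    rw [hq, sd_pow_even_ir (σ_sq M T ⟨i', hi'⟩)]
    rw [α_simple]
    set τ : SetI M cs T := ⟨cs.simple i, simple_mem_SetI M cs T hi⟩
    have hc : ((c M cs T ((M'' M T).simple ⟨i', hi'⟩) τ : SetI M cs T) : W) =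
        cs.simple i' * cs.simple i * (cs.simple i')⁻¹ := by
      rw [c_apply, ρ_simple]
    have hW : ((τ : W) * (c M cs T ((M'' M T).simple ⟨i', hi'⟩) τ : W)) ^ q = 1 := by
      rw [hc, cs.inv_simple]
      have h2 : (τ : W) * (cs.simple i' * cs.simple i * cs.simple i') =
          (cs.simple i * cs.simple i') ^ 2 := by
        show cs.simple i * (cs.simple i' * cs.simple i * cs.simple i') = _
        rw [pow_two]; group
      rw [h2, ← pow_mul]
      have : 2 * q = q + q := by ring
      rw [this, ← hq]
      exact cs.simple_mul_simple_pow i i'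
    rw [simple_pow_eq_one M cs T _ _ hW, map_one]
  · -- i ∉ T, i' ∈ T
    rw [dif_neg hi, dif_pos hi']
    obtain ⟨q, hq⟩ := heven i' hi' i hi
    rw [M.symmetric i i', hq, sd_pow_even_ri (σ_sq M T ⟨i, hi⟩)]
    rw [α_simple]
    set τ : SetI M cs T := ⟨cs.simple i', simple_mem_SetI M cs T hi'⟩
    have hc : ((c M cs T ((M'' M T).simple ⟨i, hi⟩) τ : SetI M cs T) : W) =
        cs.simple i * cs.simple i' * (cs.simple i)⁻¹ := by
      rw [c_apply, ρ_simple]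
    have hW : ((c M cs T ((M'' M T).simple ⟨i, hi⟩) τ : W) * (τ : W)) ^ q = 1 := by
      rw [hc, cs.inv_simple]
      have h2 : cs.simple i * cs.simple i' * cs.simple i * (τ : W) =
          (cs.simple i * cs.simple i') ^ 2 := by
        show cs.simple i * cs.simple i' * cs.simple i * cs.simple i' = _
        rw [pow_two]; group
      rw [h2, ← pow_mul]
      have : 2 * q = q + q := by ring
      rw [this, ← hq]
      exact cs.simple_mul_simple_pow' i' i
    rw [simple_pow_eq_one M cs T _ _ hW, map_one]
  · -- both not in T
    rw [dif_neg hi, dif_neg hi']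
    rw [← map_mul, ← map_pow]
    have := (M'' M T).toCoxeterSystem.simple_mul_simple_pow ⟨i, hi⟩ ⟨i', hi'⟩
    rw [CoxeterMatrix.toCoxeterSystem_simple, M''_apply] at this
    rw [this, map_one]

/-- The homomorphism `Ψ : W →* (M').Group ⋊ (M'').Group`. -/
noncomputable def Ψ : W →* (M' M cs T).Group ⋊[α M cs T] (M'' M T).Group :=
  cs.lift ⟨fΨ M cs T, fΨ_liftable M cs T heven⟩

lemma Ψ_simple (s : B) : Ψ M cs T heven (cs.simple s) = fΨ M cs T s :=
  cs.lift_apply_simple (fΨ_liftable M cs T heven) s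


/-! ### The retraction `r : W →* (M'').Group` -/

open Classical in
noncomputable def fr (s : B) : (M'' M T).Group :=
  if h : s ∈ T then 1 else (M'' M T).simple ⟨s, h⟩

include heven in
lemma fr_liftable : CoxeterMatrix.IsLiftable M (fr M T) := by
  intro i i'
  by_cases hi : i ∈ T <;> by_cases hi' : i' ∈ T <;> simp only [fr]
  · rw [dif_pos hi, dif_pos hi', mul_one, one_pow]
  · rw [dif_pos hi, dif_neg hi', one_mul]
    exact pow_even_eq_one (σ_sq M T ⟨i', hi'⟩) (heven i hi i' hi')
  · rw [dif_neg hi, dif_pos hi', mul_one]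
    exact pow_even_eq_one (σ_sq M T ⟨i, hi⟩) (M.symmetric i i' ▸ heven i' hi' i hi)
  · rw [dif_neg hi, dif_neg hi']
    have := (M'' M T).toCoxeterSystem.simple_mul_simple_pow ⟨i, hi⟩ ⟨i', hi'⟩
    rw [CoxeterMatrix.toCoxeterSystem_simple, M''_apply] at this
    exact this

noncomputable def r : W →* (M'' M T).Group :=
  cs.lift ⟨fr M T, fr_liftable M T heven⟩

lemma r_ρ (g : (M'' M T).Group) : r M cs T heven (ρ M cs T g) = g := by
  have : (r M cs T heven).comp (ρ M cs T) = MonoidHom.id _ := by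
    apply (M'' M T).toCoxeterSystem.ext_simple
    intro s
    rw [CoxeterMatrix.toCoxeterSystem_simple]
    simp only [MonoidHom.comp_apply, MonoidHom.id_apply]
    rw [ρ_simple]
    have : r M cs T heven (cs.simple s.1) = fr M T s.1 :=
      cs.lift_apply_simple (fr_liftable M T heven) s.1
    rw [this, fr, dif_neg s.2]
  exact DFunLike.congr_fun this g

/-! ### `Φ ∘ Ψ = id` and `Ψ ∘ Φ₁ = inl` -/

lemma Φ_Ψ : (Φ M cs T).comp (Ψ M cs T heven) = MonoidHom.id W := by
  apply cs.ext_simple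
  intro i
  simp only [MonoidHom.comp_apply, MonoidHom.id_apply, Ψ_simple]
  by_cases h : i ∈ T
  · rw [fΨ, dif_pos h]
    show Φ M cs T (inl _) = _
    rw [Φ, SemidirectProduct.lift_inl, Φ₁_simple]
  · rw [fΨ, dif_neg h]
    show Φ M cs T (inr _) = _
    rw [Φ, SemidirectProduct.lift_inr, ρ_simple]

lemma Ψ_W' {w : W} (hw : w ∈ Subgroup.closure (cs.simple '' Tᶜ)) :
    ∃ g : (M'' M T).Group, Ψ M cs T heven w = inr g ∧ ρ M cs T g = w := by
  induction hw using Subgroup.closure_induction with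
  | mem x hx =>
    obtain ⟨s, hs, rfl⟩ := hx
    refine ⟨(M'' M T).simple ⟨s, hs⟩, ?_, ρ_simple M cs T ⟨s, hs⟩⟩
    rw [Ψ_simple, fΨ, dif_neg hs]
  | one => exact ⟨1, by simp⟩
  | mul x y hx hy ihx ihy =>
    obtain ⟨g, hg1, hg2⟩ := ihx
    obtain ⟨g', hg1', hg2'⟩ := ihy
    exact ⟨g * g', by rw [map_mul, hg1, hg1', map_mul], by rw [map_mul, hg2, hg2']⟩
  | inv x hx ihx =>
    obtain ⟨g, hg1, hg2⟩ := ihx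
    exact ⟨g⁻¹, by rw [map_inv, hg1, map_inv], by rw [map_inv, hg2]⟩

lemma Ψ_SetI (τ : SetI M cs T) :
    Ψ M cs T heven (τ : W) = inl ((M' M cs T).simple τ) := by
  obtain ⟨x, hx⟩ := τ
  obtain ⟨t, ht, w, hw, rfl⟩ := hx
  obtain ⟨g, hg1, hg2⟩ := Ψ_W' M cs T heven hw
  have key : Ψ M cs T heven (w * cs.simple t * w⁻¹) =
      inr g * inl ((M' M cs T).simple ⟨cs.simple t, simple_mem_SetI M cs T ht⟩) * inr g⁻¹ := by
    rw [map_mul, map_mul, map_inv, hg1, Ψ_simple, fΨ, dif_pos ht, map_inv]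
  rw [key, ← inl_aut, α_simple]
  congr 1
  apply congrArg
  apply Subtype.ext
  rw [c_apply, hg2]

lemma Ψ_Φ₁ : (Ψ M cs T heven).comp (Φ₁ M cs T) = inl := by
  apply (M' M cs T).toCoxeterSystem.ext_simple
  intro τ
  rw [CoxeterMatrix.toCoxeterSystem_simple]
  simp only [MonoidHom.comp_apply]
  rw [Φ₁_simple, Ψ_SetI]


include heven in
lemma φ_eq (φ : W →* W) (hφ₁ : ∀ s ∉ T, φ (cs.simple s) = cs.simple s)
    (hφ₂ : ∀ t ∈ T, φ (cs.simple t) = 1) :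
    φ = (ρ M cs T).comp (rightHom.comp (Ψ M cs T heven)) := by
  apply cs.ext_simple
  intro i
  simp only [MonoidHom.comp_apply, Ψ_simple]
  by_cases h : i ∈ T
  · rw [hφ₂ i h, fΨ, dif_pos h, rightHom_inl, map_one]
  · rw [hφ₁ i h, fΨ, dif_neg h, rightHom_inr, ρ_simple]

end KernelCoxAux

/-- Under the evenness assumption on `T ⊆ S`, the pair `(ker φ_T, S_T)` is a Coxeter system:
there is a Coxeter matrix `M'` indexed by the set `S_T = {w t w⁻¹ : t ∈ T, w ∈ W_{S∖T}}` and a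
Coxeter system structure on `ker φ_T` whose simple generator at index `τ ∈ S_T` is `τ` itself. -/
theorem kernel_is_coxeter_system {B W : Type*} [Group W] (M : CoxeterMatrix B)
    (cs : CoxeterSystem M W) (T : Set B)
    (heven : ∀ t ∈ T, ∀ s ∉ T, Even (M t s))
    (φ : W →* W)
    (hφ₁ : ∀ s ∉ T, φ (cs.simple s) = cs.simple s)
    (hφ₂ : ∀ t ∈ T, φ (cs.simple t) = 1) :
    ∃ (M' : CoxeterMatrix ({x : W | ∃ t ∈ T, ∃ w ∈ Subgroup.closure (cs.simple '' Tᶜ),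
          x = w * cs.simple t * w⁻¹} : Set W))
      (cs' : CoxeterSystem M' φ.ker),
      ∀ τ, ((cs'.simple τ : φ.ker) : W) = (τ : W) := by
  classical
  have hφeq := KernelCoxAux.φ_eq M cs T heven φ hφ₁ hφ₂
  have hker : ∀ k, KernelCoxAux.Φ₁ M cs T k ∈ φ.ker := fun k => by
    rw [MonoidHom.mem_ker, hφeq]
    simp only [MonoidHom.comp_apply]
    rw [show (KernelCoxAux.Ψ M cs T heven) (KernelCoxAux.Φ₁ M cs T k) =
        SemidirectProduct.inl k from
      DFunLike.congr_fun (KernelCoxAux.Ψ_Φ₁ M cs T heven) k,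
      SemidirectProduct.rightHom_inl, map_one]
  set Φ₁' : (KernelCoxAux.M' M cs T).Group →* φ.ker :=
    (KernelCoxAux.Φ₁ M cs T).codRestrict φ.ker hker with hΦ₁'
  have hbij : Function.Bijective Φ₁' := by
    constructor
    · intro a b hab
      have h1 : KernelCoxAux.Φ₁ M cs T a = KernelCoxAux.Φ₁ M cs T b :=
        congrArg Subtype.val hab
      have h2 := congrArg (KernelCoxAux.Ψ M cs T heven) h1
      rw [show (KernelCoxAux.Ψ M cs T heven) (KernelCoxAux.Φ₁ M cs T a) =
            SemidirectProduct.inl a from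
          DFunLike.congr_fun (KernelCoxAux.Ψ_Φ₁ M cs T heven) a,
        show (KernelCoxAux.Ψ M cs T heven) (KernelCoxAux.Φ₁ M cs T b) =
            SemidirectProduct.inl b from
          DFunLike.congr_fun (KernelCoxAux.Ψ_Φ₁ M cs T heven) b] at h2
      exact SemidirectProduct.inl_injective h2
    · rintro ⟨x, hx⟩
      have h1 : φ x = 1 := hx
      rw [hφeq] at h1
      simp only [MonoidHom.comp_apply] at h1
      have h2 : SemidirectProduct.rightHom (KernelCoxAux.Ψ M cs T heven x) = 1 := by
        rw [← KernelCoxAux.r_ρ M cs T heven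
          (SemidirectProduct.rightHom (KernelCoxAux.Ψ M cs T heven x)), h1, map_one]
      obtain ⟨k, hk⟩ : KernelCoxAux.Ψ M cs T heven x ∈
          (SemidirectProduct.inl (φ := KernelCoxAux.α M cs T)).range := by
        rw [SemidirectProduct.range_inl_eq_ker_rightHom]
        exact h2
      refine ⟨k, Subtype.ext ?_⟩
      show KernelCoxAux.Φ₁ M cs T k = x
      have h3 := DFunLike.congr_fun (KernelCoxAux.Φ_Ψ M cs T heven) x
      simp only [MonoidHom.comp_apply, MonoidHom.id_apply] at h3
      calc KernelCoxAux.Φ₁ M cs T k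
          = KernelCoxAux.Φ M cs T (SemidirectProduct.inl k) := by
            rw [KernelCoxAux.Φ, SemidirectProduct.lift_inl]
        _ = KernelCoxAux.Φ M cs T (KernelCoxAux.Ψ M cs T heven x) := by rw [hk]
        _ = x := h3
  set E : (KernelCoxAux.M' M cs T).Group ≃* φ.ker := MulEquiv.ofBijective Φ₁' hbij with hE
  refine ⟨KernelCoxAux.M' M cs T, ⟨E.symm⟩, fun τ => ?_⟩
  show ((E.symm.symm (PresentedGroup.of τ) : φ.ker) : W) = (τ : W)
  rw [MulEquiv.symm_symm]
  show KernelCoxAux.Φ₁ M cs T ((KernelCoxAux.M' M cs T).simple τ) = (τ : W)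
  exact KernelCoxAux.Φ₁_simple M cs T τ
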